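/- In a rack Q, the relation α defined by a α b ⟺ b = L_a^k(a) for some integer k is an equivalence relation on Q. -/

import Mathlib

/-- In a rack `Q`, the relation `a α b ⟺ ∃ k : ℤ, b = L_a^k(a)` is an
equivalence relation on `Q`. -/
theorem orbit_of_own_translation_equivalence
    {Q : Type*} (op : Q → Q → Q)
    (hbij : ∀ a, Function.Bijective (op a))
    (hdist : ∀ x y z, op x (op y z) = op (op x y) (op x z))
    (L : Q → Equiv.Perm Q) (hL : ∀ a x, L a x = op a x) :
    Equivalence (fun a b : Q => ∃ k : ℤ, b = ((L a) ^ k) a) := by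
  have conj : ∀ a x : Q, L (op a x) = L a * L x * (L a)⁻¹ := by
    intro a x
    ext y
    have hz : op a ((L a)⁻¹ y) = y := by
      rw [← hL]; exact Equiv.apply_symm_apply (L a) y
    simp only [Equiv.Perm.mul_apply, hL]
    conv_lhs => rw [← hz]
    rw [← hdist]
  have key : ∀ (a : Q) (k : ℤ), L (((L a) ^ k) a) = L a := by
    intro a k
    induction k using Int.induction_on with
    | zero => simp
    | succ n ih =>
        have : ((L a) ^ ((n : ℤ) + 1)) a = op a (((L a) ^ (n : ℤ)) a) := by
          rw [← hL, add_comm, zpow_add, zpow_one, Equiv.Perm.mul_apply]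
        rw [this, conj, ih]
        group
    | pred n ih =>
        have h1 : ((L a) ^ (-(n : ℤ))) a = op a (((L a) ^ (-(n : ℤ) - 1)) a) := by
          rw [← hL, ← Equiv.Perm.mul_apply]
          have : L a * (L a) ^ (-(n : ℤ) - 1) = (L a) ^ (-(n : ℤ)) := by
            rw [← zpow_one_add]; norm_num
          rw [this]
        have h2 : L a * L (((L a) ^ (-(n : ℤ) - 1)) a) * (L a)⁻¹ = L a := by
          rw [← conj, ← h1, ih]
        have h3 : L (((L a) ^ (-(n : ℤ) - 1)) a) = L a := by
          have := congrArg (fun g => (L a)⁻¹ * g * (L a)) h2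
          simpa [mul_assoc] using this
        exact h3
  refine ⟨fun a => ⟨0, by simp⟩, ?_, ?_⟩
  · rintro a b ⟨k, rfl⟩
    refine ⟨-k, ?_⟩
    rw [key]
    rw [← Equiv.Perm.mul_apply, ← zpow_add]
    simp
  · rintro a b c ⟨k, rfl⟩ ⟨m, hm⟩
    refine ⟨m + k, ?_⟩
    rw [hm, key, ← Equiv.Perm.mul_apply, ← zpow_add]
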